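/- Let f : X → {0,1} be any fixed classifier and ε ∈ (0, 0.5). With probability at least 1 − 2·exp(−ε²N/6) over the flipping noise, for both i ∈ {0,1}: (1−η_{1−i})·Pr[f=1, Ẑ=i] − η_{1−i}·Pr[f=1, Ẑ=1−i] lies in the interval [(1−η_0−η_1)·Pr_D[f=1, Z=i] − ε, (1−η_0−η_1)·Pr_D[f=1, Z=i] + ε]. -/

import Mathlib

open scoped Classical

noncomputable section

/-- Empirical frequency of a predicate over `N` samples. -/
def empFreq (N : ℕ) (P : Fin N → Prop) : ℝ :=
  ((Finset.univ.filter P).card : ℝ) / N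

/-- Probability, over independent flipping noise with rates `η0` (when `Z = 0`) and `η1`
(when `Z = 1`), of an event on the noisy binary protected attributes. -/
def noiseProb (N : ℕ) (z : Fin N → Bool) (η0 η1 : ℝ)
    (E : (Fin N → Bool) → Prop) : ℝ :=
  ∑ zh : Fin N → Bool,
    if E zh then
      ∏ a, (if zh a = z a then 1 - cond (z a) η1 η0 else cond (z a) η1 η0)
    else 0

lemma exp_le_quad {u : ℝ} (hu : |u| ≤ 1) : Real.exp u ≤ 1 + u + u ^ 2 := by
  have h := Real.exp_bound hu (n := 2) (by norm_num)
  have hsum : ∑ m ∈ Finset.range 2, u ^ m / m.factorial = 1 + u := by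
    simp [Finset.sum_range_succ]
  rw [hsum] at h
  have h2 := (abs_le.1 h).2
  have : |u| ^ 2 = u ^ 2 := sq_abs u
  norm_num at h2
  nlinarith [sq_abs u, sq_nonneg u]

lemma mgf_bound {w0 w1 c0 c1 t : ℝ} (h0 : 0 ≤ w0) (h1 : 0 ≤ w1)
    (hs : w0 + w1 = 1) (hc0 : |c0| ≤ 1) (hc1 : |c1| ≤ 1)
    (hm : w0 * c0 + w1 * c1 = 0) (ht : |t| ≤ 1) :
    w0 * Real.exp (t * c0) + w1 * Real.exp (t * c1) ≤ Real.exp (t ^ 2) := by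
  have habs0 : |t * c0| ≤ 1 := by
    rw [abs_mul]; exact mul_le_one₀ ht (abs_nonneg _) hc0
  have habs1 : |t * c1| ≤ 1 := by
    rw [abs_mul]; exact mul_le_one₀ ht (abs_nonneg _) hc1
  have e0 := exp_le_quad habs0
  have e1 := exp_le_quad habs1
  have k0 : w0 * Real.exp (t * c0) ≤ w0 * (1 + t * c0 + (t * c0) ^ 2) :=
    mul_le_mul_of_nonneg_left e0 h0
  have k1 : w1 * Real.exp (t * c1) ≤ w1 * (1 + t * c1 + (t * c1) ^ 2) :=
    mul_le_mul_of_nonneg_left e1 h1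
  have hc0sq : c0 ^ 2 ≤ 1 := by nlinarith [abs_le.1 hc0]
  have hc1sq : c1 ^ 2 ≤ 1 := by nlinarith [abs_le.1 hc1]
  have m0 : w0 * (t * c0) ^ 2 ≤ w0 * t ^ 2 := by
    have : (t * c0) ^ 2 ≤ t ^ 2 := by nlinarith [sq_nonneg t]
    exact mul_le_mul_of_nonneg_left this h0
  have m1 : w1 * (t * c1) ^ 2 ≤ w1 * t ^ 2 := by
    have : (t * c1) ^ 2 ≤ t ^ 2 := by nlinarith [sq_nonneg t]
    exact mul_le_mul_of_nonneg_left this h1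
  have hexp : 1 + t ^ 2 ≤ Real.exp (t ^ 2) := by
    have := Real.add_one_le_exp (t ^ 2); linarith
  have hm2 : t * (w0 * c0) + t * (w1 * c1) = 0 := by linear_combination t * hm
  nlinarith [k0, k1, m0, m1, hm2]

lemma sum_prod_bool {N : ℕ} (h : Fin N → Bool → ℝ) :
    ∑ zh : Fin N → Bool, ∏ a, h a (zh a) = ∏ a, (h a false + h a true) := by
  have := Finset.sum_prod_piFinset (Finset.univ : Finset Bool) h
  simp only [Fintype.piFinset_univ] at this
  rw [this]
  exact Finset.prod_congr rfl fun a _ => by rw [Fintype.sum_bool]; ring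

lemma total_mass {N : ℕ} (w : Fin N → Bool → ℝ) (hw1 : ∀ a, w a false + w a true = 1) :
    ∑ zh : Fin N → Bool, ∏ a, w a (zh a) = 1 := by
  rw [sum_prod_bool]; simp [hw1]

lemma chernoff {N : ℕ} (w : Fin N → Bool → ℝ)
    (hw0 : ∀ a b, 0 ≤ w a b) (hw1 : ∀ a, w a false + w a true = 1)
    (T : Finset (Fin N)) (c : Fin N → Bool → ℝ)
    (hc : ∀ a b, |c a b| ≤ 1)
    (hmean : ∀ a, w a false * c a false + w a true * c a true = 0)
    (t B : ℝ) (ht0 : 0 ≤ t) (ht1 : t ≤ 1) :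
    ∑ zh ∈ Finset.univ.filter (fun zh : Fin N → Bool => B ≤ ∑ a ∈ T, c a (zh a)),
      ∏ a, w a (zh a) ≤ Real.exp (-(t * B) + t ^ 2 * T.card) := by
  set g : Fin N → Bool → ℝ :=
    fun a b => w a b * (if a ∈ T then Real.exp (t * c a b) else 1) with hg
  have hgnn : ∀ a b, 0 ≤ g a b := fun a b => by
    apply mul_nonneg (hw0 a b); split <;> positivity
  have hprod : ∀ zh : Fin N → Bool,
      ∏ a, g a (zh a) =
        (∏ a, w a (zh a)) * Real.exp (t * ∑ a ∈ T, c a (zh a)) := by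
    intro zh
    rw [hg, Finset.prod_mul_distrib]
    congr 1
    rw [Finset.prod_ite_mem, Finset.univ_inter, Finset.mul_sum, Real.exp_sum]
  -- step 1: Markov
  have step1 : ∑ zh ∈ Finset.univ.filter
        (fun zh : Fin N → Bool => B ≤ ∑ a ∈ T, c a (zh a)), ∏ a, w a (zh a)
      ≤ Real.exp (-(t * B)) * ∑ zh : Fin N → Bool, ∏ a, g a (zh a) := by
    rw [Finset.mul_sum]
    calc ∑ zh ∈ Finset.univ.filter
          (fun zh : Fin N → Bool => B ≤ ∑ a ∈ T, c a (zh a)), ∏ a, w a (zh a)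
        ≤ ∑ zh ∈ Finset.univ.filter
          (fun zh : Fin N → Bool => B ≤ ∑ a ∈ T, c a (zh a)),
            Real.exp (-(t * B)) * ∏ a, g a (zh a) := by
          apply Finset.sum_le_sum
          intro zh hzh
          rw [Finset.mem_filter] at hzh
          rw [hprod zh, ← mul_assoc, mul_comm (Real.exp (-(t * B))), mul_assoc,
            ← Real.exp_add]
          have h1 : (1:ℝ) ≤ Real.exp (-(t * B) + t * ∑ a ∈ T, c a (zh a)) := by
            rw [Real.one_le_exp_iff]
            have := mul_le_mul_of_nonneg_left hzh.2 ht0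
            linarith
          nlinarith [Finset.prod_nonneg (fun a (_ : a ∈ Finset.univ) => hw0 a (zh a)),
            h1]
      _ ≤ ∑ zh : Fin N → Bool, Real.exp (-(t * B)) * ∏ a, g a (zh a) := by
          apply Finset.sum_le_sum_of_subset_of_nonneg (Finset.filter_subset _ _)
          intro zh _ _
          exact mul_nonneg (Real.exp_nonneg _)
            (Finset.prod_nonneg fun a _ => hgnn a (zh a))
  -- step 2: factorize and bound the MGF
  have step2 : ∑ zh : Fin N → Bool, ∏ a, g a (zh a) ≤ Real.exp (t ^ 2 * T.card) := by
    rw [sum_prod_bool]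
    have hfac : ∀ a, g a false + g a true ≤ if a ∈ T then Real.exp (t ^ 2) else 1 := by
      intro a
      by_cases ha : a ∈ T
      · simp only [hg, ha, if_true]
        exact mgf_bound (hw0 a false) (hw0 a true) (hw1 a) (hc a false) (hc a true)
          (hmean a) (by rwa [abs_of_nonneg ht0])
      · simp only [hg, ha, if_false, mul_one]
        exact le_of_eq (hw1 a)
    calc ∏ a, (g a false + g a true)
        ≤ ∏ a, (if a ∈ T then Real.exp (t ^ 2) else 1) := by
          apply Finset.prod_le_prod
          · intro a _; exact add_nonneg (hgnn a false) (hgnn a true)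
          · intro a _; exact hfac a
      _ = Real.exp (t ^ 2) ^ T.card := by
          rw [Finset.prod_ite_mem, Finset.univ_inter, Finset.prod_const]
      _ = Real.exp (t ^ 2 * T.card) := by
          rw [← Real.exp_nat_mul, mul_comm]
  calc ∑ zh ∈ Finset.univ.filter
        (fun zh : Fin N → Bool => B ≤ ∑ a ∈ T, c a (zh a)), ∏ a, w a (zh a)
      ≤ Real.exp (-(t * B)) * ∑ zh : Fin N → Bool, ∏ a, g a (zh a) := step1
    _ ≤ Real.exp (-(t * B)) * Real.exp (t ^ 2 * T.card) :=
        mul_le_mul_of_nonneg_left step2 (Real.exp_nonneg _)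
    _ = Real.exp (-(t * B) + t ^ 2 * T.card) := (Real.exp_add _ _).symm


set_option maxHeartbeats 1000000

/-- For any fixed classifier `f` and `ε ∈ (0, 0.5)`, with probability at least
`1 − 2·exp(−ε²N/6)` over the flipping noise, for both `i ∈ {0,1}` (here `i : Bool`, with
`η_{1−i} = cond i η0 η1`):
`(1−η_{1−i})·Pr[f=1, Ẑ=i] − η_{1−i}·Pr[f=1, Ẑ=1−i] ∈ (1−η0−η1)·Pr_D[f=1, Z=i] ± ε`. -/
theorem stmt_2 {X : Type} (N : ℕ) (hN : 1 ≤ N)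
    (x : Fin N → X) (z : Fin N → Bool) (y : Fin N → Bool)
    (η0 η1 : ℝ) (hη0 : 0 < η0 ∧ η0 < 1/2) (hη1 : 0 < η1 ∧ η1 < 1/2)
    (f : X → Bool) (ε : ℝ) (hε : 0 < ε ∧ ε < 1/2) :
    1 - 2 * Real.exp (-(ε ^ 2 * N) / 6) ≤
      noiseProb N z η0 η1 (fun zh => ∀ i : Bool,
        (1 - cond i η0 η1) * empFreq N (fun a => f (x a) = true ∧ zh a = i)
            - cond i η0 η1 * empFreq N (fun a => f (x a) = true ∧ zh a = !i)
          ∈ Set.Icc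
            ((1 - η0 - η1) * empFreq N (fun a => f (x a) = true ∧ z a = i) - ε)
            ((1 - η0 - η1) * empFreq N (fun a => f (x a) = true ∧ z a = i) + ε)) := by
  classical
  obtain ⟨hε0, hεhalf⟩ := hε
  have hN0 : (0:ℝ) < N := by exact_mod_cast hN
  set w : Fin N → Bool → ℝ := fun a b =>
    if b = z a then 1 - cond (z a) η1 η0 else cond (z a) η1 η0 with hw
  have hw0 : ∀ a b, 0 ≤ w a b := by
    intro a b
    cases hz : z a <;> cases b <;>
      simp only [hw, hz, Bool.cond_false, Bool.cond_true] <;> norm_num <;>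
      linarith [hη0.1, hη0.2, hη1.1, hη1.2]
  have hw1 : ∀ a, w a false + w a true = 1 := by
    intro a
    cases hz : z a <;>
      simp only [hw, hz, Bool.cond_false, Bool.cond_true] <;> norm_num
  set T : Finset (Fin N) := Finset.univ.filter (fun a => f (x a) = true) with hT
  set c : Fin N → Bool → ℝ := fun a b => (cond b (1:ℝ) 0) - w a true with hcdef
  have hq0 : ∀ a, 0 ≤ w a true := fun a => hw0 a true
  have hq1 : ∀ a, w a true ≤ 1 := fun a => by
    have := hw1 a; have := hw0 a false; linarith
  have hc : ∀ a b, |c a b| ≤ 1 := by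
    intro a b
    have h0 := hq0 a; have h1 := hq1 a
    cases b <;> simp only [hcdef, Bool.cond_false, Bool.cond_true] <;>
      rw [abs_le] <;> constructor <;> linarith
  have hmean : ∀ a, w a false * c a false + w a true * c a true = 0 := by
    intro a
    have h := hw1 a
    simp only [hcdef, Bool.cond_false, Bool.cond_true]
    linear_combination (-(w a true)) * h
  set S : (Fin N → Bool) → ℝ := fun zh => ∑ a ∈ T, c a (zh a) with hSdef
  set Pt : ℝ := ((Finset.univ.filter (fun a => f (x a) = true ∧ z a = true)).card : ℝ)
    with hPt
  set Pf : ℝ := ((Finset.univ.filter (fun a => f (x a) = true ∧ z a = false)).card : ℝ)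
    with hPf
  have hqval : ∀ a, w a true = if z a = true then 1 - η1 else η0 := by
    intro a
    cases hz : z a <;> simp [hw, hz]
  have hfilt : ∀ zh : Fin N → Bool,
      Finset.univ.filter (fun a => f (x a) = true ∧ zh a = true)
        = T.filter (fun a => zh a = true) := by
    intro zh; rw [hT, Finset.filter_filter]
  have hfilt' : ∀ zh : Fin N → Bool,
      Finset.univ.filter (fun a => f (x a) = true ∧ zh a = false)
        = T.filter (fun a => ¬ zh a = true) := by
    intro zh
    rw [hT, Finset.filter_filter]
    apply Finset.filter_congr
    intro a _
    simp [Bool.not_eq_true]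
  have hsumq : ∑ a ∈ T, w a true = (1 - η1) * Pt + η0 * Pf := by
    rw [← Finset.sum_filter_add_sum_filter_not T (fun a => z a = true)]
    have e1 : ∑ a ∈ T.filter (fun a => z a = true), w a true
        = (1 - η1) * Pt := by
      rw [Finset.sum_congr rfl (fun a ha => by
        rw [hqval a, if_pos (Finset.mem_filter.1 ha).2]),
        Finset.sum_const, nsmul_eq_mul, hPt, hfilt z, mul_comm]
    have e2 : ∑ a ∈ T.filter (fun a => ¬ z a = true), w a true = η0 * Pf := by
      rw [Finset.sum_congr rfl (fun a ha => by
        rw [hqval a, if_neg (Finset.mem_filter.1 ha).2]),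
        Finset.sum_const, nsmul_eq_mul, hPf, hfilt' z, mul_comm]
    rw [e1, e2]
  have hcardsum : ∀ zh : Fin N → Bool,
      ((Finset.univ.filter (fun a => f (x a) = true ∧ zh a = true)).card : ℝ)
        + ((Finset.univ.filter (fun a => f (x a) = true ∧ zh a = false)).card : ℝ)
        = (T.card : ℝ) := by
    intro zh
    rw [hfilt zh, hfilt' zh]
    exact_mod_cast Finset.card_filter_add_card_filter_not
      (s := T) (p := fun a => zh a = true)
  have hPtPf : Pt + Pf = (T.card : ℝ) := by
    rw [hPt, hPf]; exact hcardsum z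
  have hSval : ∀ zh : Fin N → Bool, S zh =
      ((Finset.univ.filter (fun a => f (x a) = true ∧ zh a = true)).card : ℝ)
        - ((1 - η1) * Pt + η0 * Pf) := by
    intro zh
    simp only [hSdef, hcdef]
    rw [Finset.sum_sub_distrib, hsumq]
    congr 1
    rw [Finset.sum_congr rfl (fun a _ => by
      show (cond (zh a) (1:ℝ) 0) = if zh a = true then (1:ℝ) else 0
      cases zh a <;> simp), Finset.sum_boole, hfilt zh]
  have hfe : ∀ (P : Fin N → Prop) [i : DecidablePred P],
      empFreq N P = (((Finset.univ.filter P)).card : ℝ) / N := by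
    intro P i
    unfold empFreq
    congr!
  have hEiff : ∀ zh : Fin N → Bool,
      ((∀ i : Bool,
        (1 - cond i η0 η1) * empFreq N (fun a => f (x a) = true ∧ zh a = i)
            - cond i η0 η1 * empFreq N (fun a => f (x a) = true ∧ zh a = !i)
          ∈ Set.Icc
            ((1 - η0 - η1) * empFreq N (fun a => f (x a) = true ∧ z a = i) - ε)
            ((1 - η0 - η1) * empFreq N (fun a => f (x a) = true ∧ z a = i) + ε))
        ↔ (-(ε * N) ≤ S zh ∧ S zh ≤ ε * N)) := by
    intro zh
    set At : ℝ := ((Finset.univ.filter (fun a => f (x a) = true ∧ zh a = true)).card : ℝ)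
      with hAt
    set Af : ℝ := ((Finset.univ.filter (fun a => f (x a) = true ∧ zh a = false)).card : ℝ)
      with hAf
    have hS : S zh = At - ((1 - η1) * Pt + η0 * Pf) := hSval zh
    have hsum : At + Af = Pt + Pf := by rw [hAt, hAf, hcardsum zh, hPtPf]
    have key1 : (1 - η0) * At - η0 * Af = (1 - η0 - η1) * Pt + S zh := by
      rw [hS]; linear_combination (-η0) * hsum
    have key2 : (1 - η1) * Af - η1 * At = (1 - η0 - η1) * Pf - S zh := by
      rw [hS]; linear_combination (1 - η1) * hsum
    have id1 : (1 - η0) * (At / N) - η0 * (Af / N)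
        = (1 - η0 - η1) * (Pt / N) + S zh / N := by
      rw [show (1 - η0) * (At / N) - η0 * (Af / N)
          = ((1 - η0) * At - η0 * Af) / N by ring, key1]
      ring
    have id2 : (1 - η1) * (Af / N) - η1 * (At / N)
        = (1 - η0 - η1) * (Pf / N) - S zh / N := by
      rw [show (1 - η1) * (Af / N) - η1 * (At / N)
          = ((1 - η1) * Af - η1 * At) / N by ring, key2]
      ring
    rw [hAt, hAf] at id1 id2
    rw [hPt] at id1
    rw [hPf] at id2
    constructor
    · intro h
      have h1 := h true
      simp only [Bool.cond_true, Bool.not_true, Set.mem_Icc, hfe] at h1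
      obtain ⟨h1a, h1b⟩ := h1
      have hb1 : -ε ≤ S zh / N := by linarith [id1, h1a]
      have hb2 : S zh / N ≤ ε := by linarith [id1, h1b]
      constructor
      · have := (le_div_iff₀ hN0).1 hb1; linarith
      · have := (div_le_iff₀ hN0).1 hb2; linarith
    · intro h i
      have hb1 : -ε ≤ S zh / N := by rw [le_div_iff₀ hN0]; linarith [h.1]
      have hb2 : S zh / N ≤ ε := by rw [div_le_iff₀ hN0]; linarith [h.2]
      cases i
      · simp only [Bool.cond_false, Bool.not_false, Set.mem_Icc, hfe]
        refine ⟨?_, ?_⟩ <;> linarith [id2, hb1, hb2]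
      · simp only [Bool.cond_true, Bool.not_true, Set.mem_Icc, hfe]
        refine ⟨?_, ?_⟩ <;> linarith [id1, hb1, hb2]
  -- reduce the goal to a bound on the sum over the good set
  have hWnn : ∀ zh : Fin N → Bool, 0 ≤ ∏ a, w a (zh a) :=
    fun zh => Finset.prod_nonneg fun a _ => hw0 a (zh a)
  have main : 1 - 2 * Real.exp (-(ε ^ 2 * N) / 6) ≤
      ∑ zh ∈ Finset.univ.filter
        (fun zh : Fin N → Bool => -(ε * N) ≤ S zh ∧ S zh ≤ ε * N),
        ∏ a, w a (zh a) := by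
    have htotal : ∑ zh : Fin N → Bool, ∏ a, w a (zh a) = 1 := total_mass w hw1
    have hsplit := Finset.sum_filter_add_sum_filter_not Finset.univ
      (fun zh : Fin N → Bool => -(ε * N) ≤ S zh ∧ S zh ≤ ε * N)
      (fun zh => ∏ a, w a (zh a))
    by_cases hcase : ε * N ≤ 2 * (T.card : ℝ)
    · -- Chernoff case
      have hm0 : (0:ℝ) < (T.card : ℝ) := by nlinarith [mul_pos hε0 hN0]
      set t : ℝ := ε * N / (2 * (T.card : ℝ)) with htdef
      have ht0 : 0 ≤ t := by positivity
      have ht1 : t ≤ 1 := by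
        rw [htdef, div_le_one (by linarith)]; linarith
      have tail1 := chernoff w hw0 hw1 T c hc hmean t (ε * N) ht0 ht1
      have tail2 := chernoff w hw0 hw1 T (fun a b => -(c a b))
        (fun a b => by rw [abs_neg]; exact hc a b)
        (fun a => by linear_combination (-1 : ℝ) * hmean a) t (ε * N) ht0 ht1
      have hneg : ∀ zh : Fin N → Bool, ∑ a ∈ T, -(c a (zh a)) = - S zh := by
        intro zh; simp [hSdef]
      simp only [hneg] at tail2
      have hmN : (T.card : ℝ) ≤ (N : ℝ) := by
        have : T.card ≤ N := by
          have := Finset.card_le_univ T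
          simpa using this
        exact_mod_cast this
      have hexp : -(t * (ε * N)) + t ^ 2 * (T.card : ℝ) ≤ -(ε ^ 2 * N) / 6 := by
        have h1 : -(t * (ε * N)) + t ^ 2 * (T.card : ℝ)
            = -(ε ^ 2 * N ^ 2) / (4 * (T.card : ℝ)) := by
          rw [htdef]; field_simp; ring
        rw [h1, neg_div, neg_div, neg_le_neg_iff]
        rw [div_le_div_iff₀ (by norm_num) (by linarith)]
        nlinarith [mul_le_mul_of_nonneg_left hmN
          (show (0:ℝ) ≤ ε ^ 2 * N by positivity), sq_nonneg ε]
      have hT1 : ∑ zh ∈ Finset.univ.filter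
          (fun zh : Fin N → Bool => ε * N ≤ S zh), ∏ a, w a (zh a)
          ≤ Real.exp (-(ε ^ 2 * N) / 6) := by
        refine le_trans ?_ (Real.exp_le_exp.2 hexp)
        exact tail1
      have hT2 : ∑ zh ∈ Finset.univ.filter
          (fun zh : Fin N → Bool => ε * N ≤ -S zh), ∏ a, w a (zh a)
          ≤ Real.exp (-(ε ^ 2 * N) / 6) := by
        refine le_trans ?_ (Real.exp_le_exp.2 hexp)
        exact tail2
      have hsub : Finset.univ.filter
            (fun zh : Fin N → Bool => ¬(-(ε * N) ≤ S zh ∧ S zh ≤ ε * N))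
          ⊆ Finset.univ.filter (fun zh : Fin N → Bool => ε * N ≤ S zh)
            ∪ Finset.univ.filter (fun zh : Fin N → Bool => ε * N ≤ -S zh) := by
        intro zh hzh
        rw [Finset.mem_filter] at hzh
        rw [Finset.mem_union, Finset.mem_filter, Finset.mem_filter]
        rcases not_and_or.1 hzh.2 with hl | hr
        · right
          exact ⟨Finset.mem_univ _, by push_neg at hl; linarith⟩
        · left
          exact ⟨Finset.mem_univ _, by push_neg at hr; linarith⟩
      have hbad : ∑ zh ∈ Finset.univ.filter
            (fun zh : Fin N → Bool => ¬(-(ε * N) ≤ S zh ∧ S zh ≤ ε * N)),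
            ∏ a, w a (zh a)
          ≤ 2 * Real.exp (-(ε ^ 2 * N) / 6) := by
        calc ∑ zh ∈ Finset.univ.filter
              (fun zh : Fin N → Bool => ¬(-(ε * N) ≤ S zh ∧ S zh ≤ ε * N)),
              ∏ a, w a (zh a)
            ≤ ∑ zh ∈ (Finset.univ.filter (fun zh : Fin N → Bool => ε * N ≤ S zh)
                ∪ Finset.univ.filter (fun zh : Fin N → Bool => ε * N ≤ -S zh)),
              ∏ a, w a (zh a) :=
              Finset.sum_le_sum_of_subset_of_nonneg hsub (fun zh _ _ => hWnn zh)
          _ ≤ (∑ zh ∈ Finset.univ.filter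
                (fun zh : Fin N → Bool => ε * N ≤ S zh), ∏ a, w a (zh a))
              + ∑ zh ∈ Finset.univ.filter
                (fun zh : Fin N → Bool => ε * N ≤ -S zh), ∏ a, w a (zh a) := by
              rw [← Finset.union_sdiff_self_eq_union, Finset.sum_union Finset.disjoint_sdiff]
              have h2 := Finset.sum_le_sum_of_subset_of_nonneg
                (Finset.sdiff_subset (s := Finset.univ.filter
                  (fun zh : Fin N → Bool => ε * N ≤ -S zh))
                  (t := Finset.univ.filter (fun zh : Fin N → Bool => ε * N ≤ S zh)))
                (fun zh _ _ => hWnn zh)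
              linarith
          _ ≤ 2 * Real.exp (-(ε ^ 2 * N) / 6) := by linarith
      linarith [hsplit, htotal, hbad]
    · -- trivial case : the good event always holds
      push_neg at hcase
      have hall : Finset.univ.filter
          (fun zh : Fin N → Bool => -(ε * N) ≤ S zh ∧ S zh ≤ ε * N)
          = Finset.univ := by
        apply Finset.filter_true_of_mem
        intro zh _
        have habs : |S zh| ≤ (T.card : ℝ) := by
          calc |S zh| ≤ ∑ a ∈ T, |c a (zh a)| := Finset.abs_sum_le_sum_abs _ _
            _ ≤ ∑ a ∈ T, 1 := Finset.sum_le_sum fun a _ => hc a (zh a)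
            _ = (T.card : ℝ) := by simp
        have h1 := abs_le.1 habs
        have hc0 : (0:ℝ) ≤ (T.card : ℝ) := Nat.cast_nonneg _
        constructor <;> linarith
      rw [hall, htotal]
      linarith [Real.exp_pos (-(ε ^ 2 * N) / 6)]
  -- transfer via the event equivalence
  unfold noiseProb
  refine le_trans main (le_of_eq ?_)
  rw [Finset.sum_filter]
  refine Finset.sum_congr rfl fun zh _ => ?_
  simp only [hEiff zh, hw]
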